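/- En\ss–Veselić stability argument (discrete-spectrum version): if U₀ is a unitary operator whose spectrum is a countable set of eigenvalues forming a discrete subset of the unit circle, and U is a unitary operator with U - U₀ compact, then U has no absolutely continuous or singular continuous spectrum; its spectrum is pure point. -/

import Mathlib

open Polynomial Filter ContinuousLinearMap
open scoped InnerProductSpace Topology

namespace EnssVeselic

variable {E : Type*} [NormedAddCommGroup E] [InnerProductSpace ℂ E] [CompleteSpace E]

local notation "⟪" x ", " y "⟫" => @inner ℂ _ _ x y

lemma norm_star_apply (S : E →L[ℂ] E) (hS : Commute (star S) S) (x : E) :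
    ‖star S x‖ = ‖S x‖ := by
  have h1 : ‖S x‖ ^ 2 = RCLike.re ⟪(ContinuousLinearMap.adjoint S ∘L S) x, x⟫ :=
    ContinuousLinearMap.apply_norm_sq_eq_inner_adjoint_left S x
  have h2 : ‖ContinuousLinearMap.adjoint S x‖ ^ 2
      = RCLike.re ⟪(S ∘L ContinuousLinearMap.adjoint S) x, x⟫ := by
    simpa [ContinuousLinearMap.adjoint_adjoint] using
      ContinuousLinearMap.apply_norm_sq_eq_inner_adjoint_left (ContinuousLinearMap.adjoint S) x
  have hc : S ∘L ContinuousLinearMap.adjoint S = ContinuousLinearMap.adjoint S ∘L S := by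
    have := hS.symm.eq
    rw [ContinuousLinearMap.star_eq_adjoint] at this
    exact this
  rw [ContinuousLinearMap.star_eq_adjoint]
  have h3 : ‖ContinuousLinearMap.adjoint S x‖ ^ 2 = ‖S x‖ ^ 2 := by rw [h1, h2, hc]
  nlinarith [norm_nonneg (ContinuousLinearMap.adjoint S x), norm_nonneg (S x)]

lemma exists_approx_eigen (T : E →L[ℂ] E) (hT : Commute (star T) T) {z : ℂ}
    (hz : z ∈ spectrum ℂ T) {ε : ℝ} (hε : 0 < ε) :
    ∃ x : E, ‖x‖ = 1 ∧ ‖T x - z • x‖ < ε := by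
  by_contra hcon
  push_neg at hcon
  set S : E →L[ℂ] E := T - algebraMap ℂ (E →L[ℂ] E) z with hSdef
  have hSx : ∀ x : E, S x = T x - z • x := by
    intro x
    simp [hSdef, Algebra.algebraMap_eq_smul_one, ContinuousLinearMap.sub_apply,
      ContinuousLinearMap.smul_apply, ContinuousLinearMap.one_apply]
  have hbd : ∀ x : E, ε * ‖x‖ ≤ ‖S x‖ := by
    intro x
    rcases eq_or_ne x 0 with rfl | hx
    · simp
    · have h1 := hcon ((‖x‖⁻¹ : ℂ) • x) (norm_smul_inv_norm hx)
      rw [← hSx] at h1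
      rw [map_smul] at h1
      rw [norm_smul] at h1
      have hxn : (0:ℝ) < ‖x‖ := norm_pos_iff.mpr hx
      have : ‖(‖x‖⁻¹ : ℂ)‖ = ‖x‖⁻¹ := by
        simp [norm_inv]
      rw [this] at h1
      calc ε * ‖x‖ ≤ (‖x‖⁻¹ * ‖S x‖) * ‖x‖ := by nlinarith
        _ = ‖S x‖ := by field_simp
  -- S is normal
  have halg : ∀ (w : ℂ) (B : E →L[ℂ] E), Commute (algebraMap ℂ (E →L[ℂ] E) w) B :=
    fun w B => (Algebra.commutes w B)
  have hstarS : star S = star T - algebraMap ℂ (E →L[ℂ] E) (starRingEnd ℂ z) := by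
    rw [hSdef, star_sub]
    congr 1
    simp [Algebra.algebraMap_eq_smul_one, star_smul]
  have hSS : Commute (star S) S := by
    rw [hstarS, hSdef]
    have c1 : Commute (star T) (T - algebraMap ℂ (E →L[ℂ] E) z) :=
      hT.sub_right (halg z (star T)).symm
    have c2 : Commute (algebraMap ℂ (E →L[ℂ] E) (starRingEnd ℂ z))
        (T - algebraMap ℂ (E →L[ℂ] E) z) :=
      (halg _ T).sub_right (halg _ _)
    exact c1.sub_left c2
  -- S is injective with closed range
  have hanti : AntilipschitzWith (⟨ε, hε.le⟩ : NNReal)⁻¹ ⇑S := by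
    apply ContinuousLinearMap.antilipschitz_of_bound
    intro x
    have h9 := hbd x
    have h8 : (((⟨ε, hε.le⟩ : NNReal)⁻¹ : NNReal) : ℝ) = ε⁻¹ := by
      exact NNReal.coe_inv _
    rw [h8, inv_mul_eq_div, le_div_iff₀ hε]
    nlinarith
  have hker : LinearMap.ker (S : E →ₗ[ℂ] E) = ⊥ := by
    rw [Submodule.eq_bot_iff]
    intro x hx
    have h0 : S x = 0 := hx
    have := hbd x
    rw [h0, norm_zero] at this
    have : ‖x‖ ≤ 0 := by nlinarith
    simpa [norm_le_zero_iff] using this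
  have hrange : LinearMap.range (S : E →ₗ[ℂ] E) = ⊤ := by
    have h1 : IsClosed ((LinearMap.range (S : E →ₗ[ℂ] E) : Submodule ℂ E) : Set E) := by
      rw [LinearMap.coe_range]
      exact hanti.isClosed_range S.uniformContinuous
    have horth : (LinearMap.range (S : E →ₗ[ℂ] E))ᗮ = ⊥ := by
      rw [Submodule.eq_bot_iff]
      intro y hy
      have h4 : ∀ x : E, ⟪x, star S y⟫ = 0 := by
        intro x
        rw [ContinuousLinearMap.star_eq_adjoint, ContinuousLinearMap.adjoint_inner_right]
        exact (Submodule.mem_orthogonal _ y).mp hy (S x) (LinearMap.mem_range_self _ x)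
      have h5 : star S y = 0 := by
        have := h4 (star S y)
        rwa [inner_self_eq_zero] at this
      have h6 : ‖S y‖ = 0 := by rw [← norm_star_apply S hSS, h5, norm_zero]
      have h7 := hbd y
      rw [h6] at h7
      have : ‖y‖ ≤ 0 := by nlinarith
      simpa [norm_le_zero_iff] using this
    rw [← h1.submodule_topologicalClosure_eq, Submodule.topologicalClosure_eq_top_iff]
    exact horth
  have hunit : IsUnit S := by
    refine ⟨⟨S, ((ContinuousLinearEquiv.ofBijective S hker hrange).symm : E →L[ℂ] E), ?_, ?_⟩, rfl⟩
    · ext x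
      have := (ContinuousLinearEquiv.ofBijective S hker hrange).apply_symm_apply x
      simpa [ContinuousLinearMap.mul_apply] using this
    · ext x
      have := (ContinuousLinearEquiv.ofBijective S hker hrange).symm_apply_apply x
      simpa [ContinuousLinearMap.mul_apply] using this
  exact (spectrum.mem_iff.mp hz) (by simpa [hSdef, neg_sub] using hunit.neg)

lemma exists_subseq_tendsto (C : E →L[ℂ] E) (hC : IsCompactOperator ⇑C)
    (x : ℕ → E) (hx : ∀ n, ‖x n‖ = 1) {c : ℂ} (hc : c ≠ 0)
    (h : Tendsto (fun n => C (x n) - c • x n) atTop (nhds 0)) :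
    ∃ (y : E) (φ : ℕ → ℕ), StrictMono φ ∧ Tendsto (fun n => x (φ n)) atTop (nhds y) := by
  have hK : IsCompact (closure (⇑C '' Metric.closedBall 0 1)) :=
    hC.isCompact_closure_image_closedBall (𝕜₁ := ℂ) 1
  have hmem : ∀ n, C (x n) ∈ closure (⇑C '' Metric.closedBall 0 1) := by
    intro n
    apply subset_closure
    exact ⟨x n, by simp [Metric.mem_closedBall, (hx n).le, dist_eq_norm], rfl⟩
  obtain ⟨a, -, φ, hφ, hTend⟩ := hK.tendsto_subseq hmem
  refine ⟨c⁻¹ • a, φ, hφ, ?_⟩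
  have h2 : Tendsto (fun n => C (x (φ n)) - c • x (φ n)) atTop (nhds 0) :=
    h.comp hφ.tendsto_atTop
  have h3 : Tendsto (fun n => c • x (φ n)) atTop (nhds a) := by
    have := hTend.sub h2
    simpa using this
  have h4 := h3.const_smul c⁻¹
  have h5 : ∀ n, c⁻¹ • (c • x (φ n)) = x (φ n) := by
    intro n
    rw [smul_smul, inv_mul_cancel₀ hc, one_smul]
  simpa [h5] using h4

lemma star_aeval (T : E →L[ℂ] E) (p : ℂ[X]) :
    star (aeval T p) = aeval (star T) (p.map (starRingEnd ℂ)) := by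
  have halgstar : ∀ c : ℂ, star (algebraMap ℂ (E →L[ℂ] E) c)
      = algebraMap ℂ (E →L[ℂ] E) (starRingEnd ℂ c) := by
    intro c
    simp [Algebra.algebraMap_eq_smul_one, star_smul]
  induction p using Polynomial.induction_on' with
  | add p q hp hq => simp [star_add, hp, hq]
  | monomial n c =>
      rw [aeval_monomial, Polynomial.map_monomial, aeval_monomial, star_mul, star_pow,
        halgstar]
      exact (Algebra.commutes _ _).symm

lemma isStarNormal_aeval (T : E →L[ℂ] E) (hT : IsStarNormal T) (p : ℂ[X]) :
    IsStarNormal (aeval T p) := by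
  let S := StarAlgebra.elemental ℂ T
  have h1 : aeval T p ∈ S := by
    have h2 : Algebra.adjoin ℂ {T} ≤ S.toSubalgebra := by
      apply Algebra.adjoin_le
      exact Set.singleton_subset_iff.mpr (StarAlgebra.elemental.self_mem ℂ T)
    exact h2 (Polynomial.aeval_mem_adjoin_singleton ℂ T)
  have h2 : star (aeval T p) ∈ S := star_mem h1
  constructor
  have h3 := mul_comm (⟨star (aeval T p), h2⟩ : S) (⟨aeval T p, h1⟩ : S)
  have h4 := congrArg Subtype.val h3
  exact h4

lemma aeval_mem_of_mem {T : E →L[ℂ] E} {M : Submodule ℂ E} (hT : ∀ x ∈ M, T x ∈ M)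
    (p : ℂ[X]) {x : E} (hx : x ∈ M) : aeval T p x ∈ M := by
  have hpow : ∀ (n : ℕ), ∀ y ∈ M, (T ^ n) y ∈ M := by
    intro n
    induction n with
    | zero => intro y hy; simpa using hy
    | succ n ih =>
        intro y hy
        rw [pow_succ, ContinuousLinearMap.mul_apply]
        exact ih _ (hT y hy)
  induction p using Polynomial.induction_on' with
  | add p q hp hq => simpa [ContinuousLinearMap.add_apply] using add_mem hp hq
  | monomial n c =>
      rw [aeval_monomial, ContinuousLinearMap.mul_apply]
      have h5 : algebraMap ℂ (E →L[ℂ] E) c ((T ^ n) x) = c • ((T ^ n) x) := by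
        simp [Algebra.algebraMap_eq_smul_one]
      rw [h5]
      exact Submodule.smul_mem _ _ (hpow n x hx)

lemma listprod_mem {T : E →L[ℂ] E} {M : Submodule ℂ E} (hT : ∀ x ∈ M, T x ∈ M)
    (l : List ℂ) : ∀ x ∈ M, (l.map fun w => T - algebraMap ℂ (E →L[ℂ] E) w).prod x ∈ M := by
  induction l with
  | nil => intro x hx; simpa using hx
  | cons w l ih =>
      intro x hx
      rw [List.map_cons, List.prod_cons, ContinuousLinearMap.mul_apply]
      have h1 := ih x hx
      have h2 : (T - algebraMap ℂ (E →L[ℂ] E) w) ((l.map fun w => T - algebraMap ℂ (E →L[ℂ] E) w).prod x)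
          = T ((l.map fun w => T - algebraMap ℂ (E →L[ℂ] E) w).prod x)
            - w • ((l.map fun w => T - algebraMap ℂ (E →L[ℂ] E) w).prod x) := by
        simp [ContinuousLinearMap.sub_apply, Algebra.algebraMap_eq_smul_one]
      rw [h2]
      exact sub_mem (hT _ h1) (Submodule.smul_mem _ _ h1)

lemma exists_eigenvector_of_prod (T : E →L[ℂ] E) {M : Submodule ℂ E}
    (hM : ∀ x ∈ M, T x ∈ M) (l : List ℂ) :
    ∀ x ∈ M, x ≠ 0 → (l.map fun w => T - algebraMap ℂ (E →L[ℂ] E) w).prod x = 0 →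
    ∃ v ∈ M, v ≠ 0 ∧ ∃ w : ℂ, T v = w • v := by
  induction l with
  | nil =>
      intro x hx hx0 h
      simp at h
      exact absurd h hx0
  | cons w l ih =>
      intro x hx hx0 h
      rw [List.map_cons, List.prod_cons, ContinuousLinearMap.mul_apply] at h
      set y := (l.map fun w => T - algebraMap ℂ (E →L[ℂ] E) w).prod x with hy
      rcases eq_or_ne y 0 with hy0 | hy0
      · exact ih x hx hx0 hy0
      · refine ⟨y, listprod_mem hM l x hx, hy0, w, ?_⟩
        have h2 : T y - w • y = 0 := by
          have h3 : (T - algebraMap ℂ (E →L[ℂ] E) w) y = T y - w • y := by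
            simp [ContinuousLinearMap.sub_apply, Algebra.algebraMap_eq_smul_one]
          rw [← h3, h]
        exact sub_eq_zero.mp h2

lemma countable_eigenvalues [TopologicalSpace.SeparableSpace E] (U : E →L[ℂ] E)
    (h1 : ContinuousLinearMap.adjoint U * U = 1) :
    {z : ℂ | ∃ x : E, ‖x‖ = 1 ∧ U x = z • x}.Countable := by
  set Λ := {z : ℂ | ∃ x : E, ‖x‖ = 1 ∧ U x = z • x} with hΛ
  -- U preserves inner products
  have hinner : ∀ a b : E, ⟪U a, U b⟫ = ⟪a, b⟫ := by
    intro a b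
    rw [← ContinuousLinearMap.adjoint_inner_right]
    have : ContinuousLinearMap.adjoint U (U b) = b := by
      have := congrArg (fun (f : E →L[ℂ] E) => f b) h1
      simpa [ContinuousLinearMap.mul_apply] using this
    rw [this]
  -- eigenvectors for distinct eigenvalues are orthogonal
  have horth : ∀ (z₁ z₂ : ℂ) (x₁ x₂ : E), ‖x₁‖ = 1 → ‖x₂‖ = 1 → U x₁ = z₁ • x₁ →
      U x₂ = z₂ • x₂ → z₁ ≠ z₂ → ⟪x₁, x₂⟫ = 0 := by
    intro z₁ z₂ x₁ x₂ hx₁ hx₂ he₁ he₂ hne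
    by_contra hip
    have key : ⟪x₁, x₂⟫ = (starRingEnd ℂ z₁) * z₂ * ⟪x₁, x₂⟫ := by
      conv_lhs => rw [← hinner x₁ x₂, he₁, he₂]
      rw [inner_smul_left, inner_smul_right]
      ring
    have h2 : (starRingEnd ℂ z₁) * z₂ = 1 := by
      by_contra h3
      apply hip
      have h4 : ((starRingEnd ℂ z₁) * z₂ - 1) * ⟪x₁, x₂⟫ = 0 := by
        rw [sub_mul, one_mul, ← key, sub_self]
      rcases mul_eq_zero.mp h4 with h5 | h5
      · exact absurd (by linear_combination h5 : (starRingEnd ℂ z₁) * z₂ = 1) h3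
      · exact h5
    have hz₁ : (starRingEnd ℂ z₁) * z₁ = 1 := by
      have h6 : ‖U x₁‖ = 1 := by
        have := hinner x₁ x₁
        have h8 : ‖U x₁‖ ^ 2 = ‖x₁‖ ^ 2 := by
          rw [← @inner_self_eq_norm_sq ℂ, ← @inner_self_eq_norm_sq ℂ, this]
        nlinarith [norm_nonneg (U x₁), norm_nonneg x₁]
      rw [he₁, norm_smul, hx₁, mul_one] at h6
      have : (starRingEnd ℂ z₁) * z₁ = (‖z₁‖ : ℂ) ^ 2 := by
        rw [← Complex.normSq_eq_conj_mul_self]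
        rw [Complex.normSq_eq_norm_sq]
        norm_cast
      rw [this, h6]
      norm_num
    have : z₁ = z₂ := by
      have hz₁ne : (starRingEnd ℂ z₁) ≠ 0 := by
        intro h0
        rw [h0, zero_mul] at hz₁
        exact zero_ne_one hz₁
      exact mul_left_cancel₀ hz₁ne (hz₁.trans h2.symm)
    exact hne this
  -- choose a unit eigenvector for each eigenvalue
  obtain ⟨D, hDc, hDd⟩ := TopologicalSpace.exists_countable_dense E
  rw [← Set.countable_coe_iff]
  have hv : ∀ z : Λ, ∃ x : E, ‖x‖ = 1 ∧ U x = (z : ℂ) • x := fun z => z.2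
  choose v hv1 hv2 using hv
  have hd : ∀ z : Λ, ∃ d ∈ D, dist (v z) d < 2⁻¹ :=
    fun z => hDd.exists_dist_lt (v z) (by norm_num)
  choose d hd1 hd2 using hd
  haveI : Countable D := hDc.to_subtype
  have hinj : Function.Injective (fun z : Λ => (⟨d z, hd1 z⟩ : D)) := by
    intro z₁ z₂ h12
    have hdd : d z₁ = d z₂ := congrArg Subtype.val h12
    by_contra hne
    have hne' : (z₁ : ℂ) ≠ (z₂ : ℂ) := fun h => hne (Subtype.ext h)
    have hortho := horth _ _ _ _ (hv1 z₁) (hv1 z₂) (hv2 z₁) (hv2 z₂) hne'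
    have hsq : ‖v z₁ - v z₂‖ ^ 2 = 2 := by
      have := @norm_sub_sq ℂ _ _ _ _ (v z₁) (v z₂)
      rw [hortho] at this
      rw [this, hv1 z₁, hv1 z₂]
      norm_num
    have hlt : dist (v z₁) (v z₂) < 1 := by
      calc dist (v z₁) (v z₂) ≤ dist (v z₁) (d z₁) + dist (d z₁) (v z₂) := dist_triangle _ _ _
        _ < 2⁻¹ + 2⁻¹ := by
            have := hd2 z₂
            rw [← hdd] at this
            rw [dist_comm (d z₁)]
            exact add_lt_add (hd2 z₁) this
        _ = 1 := by norm_num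
    rw [dist_eq_norm] at hlt
    nlinarith [norm_nonneg (v z₁ - v z₂)]
  exact hinj.countable

lemma finite_spectrum {A : Type*} [NormedRing A] [NormedAlgebra ℂ A] [CompleteSpace A]
    (a : A) (hdiscrete : ∀ z ∈ spectrum ℂ a, ∃ ε > 0,
      spectrum ℂ a ∩ Metric.ball z ε = {z}) : (spectrum ℂ a).Finite := by
  apply (spectrum.isCompact a).finite
  rw [isDiscrete_iff_discreteTopology, discreteTopology_subtype_iff]
  intro x hx
  obtain ⟨ε, hε, hball⟩ := hdiscrete x hx
  rw [← le_bot_iff]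
  have h1 : Metric.ball x ε ∩ {x}ᶜ ∈ 𝓝[≠] x :=
    Filter.inter_mem (mem_nhdsWithin_of_mem_nhds (Metric.ball_mem_nhds x hε))
      self_mem_nhdsWithin
  calc 𝓝[≠] x ⊓ Filter.principal (spectrum ℂ a)
      ≤ Filter.principal (Metric.ball x ε ∩ {x}ᶜ) ⊓ Filter.principal (spectrum ℂ a) :=
        inf_le_inf_right _ (Filter.le_principal_iff.mpr h1)
    _ = Filter.principal ((Metric.ball x ε ∩ {x}ᶜ) ∩ spectrum ℂ a) := by rw [inf_principal]
    _ = ⊥ := by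
        rw [Filter.principal_eq_bot_iff]
        ext y
        simp only [Set.mem_inter_iff, Set.mem_compl_iff, Set.mem_singleton_iff,
          Set.mem_empty_iff_false, iff_false, not_and, and_imp]
        intro hy1 hy2 hy3
        apply hy2
        have : y ∈ spectrum ℂ a ∩ Metric.ball x ε := ⟨hy3, hy1⟩
        rw [hball] at this
        exact this

end EnssVeselic


set_option maxHeartbeats 1000000

open EnssVeselic in
/-- Enß–Veselić stability argument: if `U₀` is unitary with countable spectrum
(a discrete set of eigenvalues on the unit circle) and `U` is unitary with `U - U₀`
compact, then `U` has pure point spectrum: the spectrum of `U` is countable and the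
eigenvectors of `U` span a dense subspace (no continuous spectral subspace). -/
theorem enss_veselic_pure_point {H : Type*} [NormedAddCommGroup H]
    [InnerProductSpace ℂ H] [CompleteSpace H] [TopologicalSpace.SeparableSpace H]
    (U₀ U : H →L[ℂ] H)
    (hU₀ : (U₀.adjoint * U₀ = 1) ∧ (U₀ * U₀.adjoint = 1))
    (hU : (U.adjoint * U = 1) ∧ (U * U.adjoint = 1))
    (hspec₀ : (spectrum ℂ U₀).Countable)
    (hdiscrete : ∀ z ∈ spectrum ℂ U₀, ∃ ε > 0,
      spectrum ℂ U₀ ∩ Metric.ball z ε = {z})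
    (heig₀ : ∀ z ∈ spectrum ℂ U₀, Module.End.HasEigenvalue (U₀ : H →ₗ[ℂ] H) z)
    (hK : IsCompactOperator (U - U₀ : H →L[ℂ] H)) :
    (spectrum ℂ U).Countable ∧
      (⨆ μ : ℂ, Module.End.eigenspace (U : H →ₗ[ℂ] H) μ).topologicalClosure = ⊤ := by
  classical
  rcases subsingleton_or_nontrivial H with hs | hnt
  · constructor
    · have hsub : Subsingleton (H →L[ℂ] H) :=
        ⟨fun f g => ContinuousLinearMap.ext fun x => Subsingleton.elim _ _⟩
      have hempty : spectrum ℂ U ⊆ (∅ : Set ℂ) := fun z hz =>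
        absurd (isUnit_of_subsingleton _) hz
      exact Set.Countable.mono hempty Set.countable_empty
    · exact Subsingleton.elim _ _
  have hUnormal : Commute (star U) U := by
    rw [ContinuousLinearMap.star_eq_adjoint]
    exact hU.1.trans hU.2.symm
  haveI hU₀normal : IsStarNormal U₀ :=
    ⟨by rw [ContinuousLinearMap.star_eq_adjoint]; exact hU₀.1.trans hU₀.2.symm⟩
  haveI : Nontrivial (H →L[ℂ] H) := by
    obtain ⟨x, hx⟩ := exists_ne (0 : H)
    exact ⟨1, 0, fun h01 => hx (by simpa using congrArg (fun f : H →L[ℂ] H => f x) h01)⟩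
  -- the spectrum of U₀ is finite
  have hfin := finite_spectrum U₀ hdiscrete
  set t : Finset ℂ := hfin.toFinset with ht
  have htspec : (↑t : Set ℂ) = spectrum ℂ U₀ := hfin.coe_toFinset
  have htne : t.Nonempty := by
    rw [← Finset.coe_nonempty, htspec]
    exact spectrum.nonempty U₀
  set q : ℂ[X] := ∏ z ∈ t, (Polynomial.X - Polynomial.C z) with hq
  have hqmonic : q.Monic := Polynomial.monic_prod_of_monic _ _ fun z _ => Polynomial.monic_X_sub_C z
  have hqdeg : 0 < q.degree := by
    rw [hq, Polynomial.degree_prod]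
    have : ∀ z ∈ t, (Polynomial.X - Polynomial.C z).degree = 1 := fun z _ =>
      Polynomial.degree_X_sub_C z
    rw [Finset.sum_congr rfl this]
    simp only [Finset.sum_const, nsmul_eq_mul, mul_one]
    exact_mod_cast htne.card_pos
  set A : H →L[ℂ] H := Polynomial.aeval U₀ q with hA
  set B : H →L[ℂ] H := Polynomial.aeval U q with hB
  -- A = 0
  have hA0 : A = 0 := by
    haveI hAnormal := isStarNormal_aeval U₀ hU₀normal q
    have hσA : spectrum ℂ A = (fun k => q.eval k) '' spectrum ℂ U₀ :=
      spectrum.map_polynomial_aeval_of_degree_pos U₀ q hqdeg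
    have himg : (fun k => q.eval k) '' spectrum ℂ U₀ = {0} := by
      apply Set.Subset.antisymm
      · rintro - ⟨z, hz, rfl⟩
        have hzt : z ∈ t := by rw [← htspec] at hz; exact_mod_cast hz
        have : q.eval z = 0 := by
          rw [hq, Polynomial.eval_prod]
          exact Finset.prod_eq_zero hzt (by simp)
        simp [this]
      · rintro z hz0
        rcases htne with ⟨z₀, hz₀⟩
        have hz₀' : z₀ ∈ spectrum ℂ U₀ := by rw [← htspec]; exact_mod_cast hz₀
        have he : q.eval z₀ = 0 := by
          rw [hq, Polynomial.eval_prod]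
          exact Finset.prod_eq_zero hz₀ (by simp)
        rw [Set.mem_singleton_iff] at hz0
        subst hz0
        exact ⟨z₀, hz₀', he⟩
    have hrad : spectralRadius ℂ A = 0 := by
      simp [spectralRadius, hσA, himg]
    have := IsStarNormal.spectralRadius_eq_nnnorm A
    rw [hrad] at this
    have : ‖A‖₊ = 0 := by exact_mod_cast this.symm
    simpa using this
  -- B is compact
  have hpowC : ∀ n : ℕ, IsCompactOperator ⇑(U ^ n - U₀ ^ n) := by
    intro n
    induction n with
    | zero =>
        rw [pow_zero, pow_zero, sub_self]
        simpa using (isCompactOperator_zero : IsCompactOperator (0 : H → H))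
    | succ n ih =>
        have key : U ^ (n + 1) - U₀ ^ (n + 1)
            = U ^ n * (U - U₀) + (U ^ n - U₀ ^ n) * U₀ := by
          rw [pow_succ, pow_succ]
          noncomm_ring
        rw [key, ContinuousLinearMap.coe_add']
        apply IsCompactOperator.add
        · have h1 : ⇑(U ^ n * (U - U₀)) = ⇑(U ^ n) ∘ ⇑(U - U₀) := rfl
          rw [h1]
          exact hK.clm_comp (U ^ n)
        · have h1 : ⇑((U ^ n - U₀ ^ n) * U₀) = ⇑(U ^ n - U₀ ^ n) ∘ ⇑U₀ := rfl
          rw [h1]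
          exact ih.comp_clm U₀
  have hdiffC : ∀ p : ℂ[X], IsCompactOperator ⇑(Polynomial.aeval U p - Polynomial.aeval U₀ p) := by
    intro p
    induction p using Polynomial.induction_on' with
    | add p r hp hr =>
        have key : Polynomial.aeval U (p + r) - Polynomial.aeval U₀ (p + r)
            = (Polynomial.aeval U p - Polynomial.aeval U₀ p)
              + (Polynomial.aeval U r - Polynomial.aeval U₀ r) := by
          simp only [map_add]
          abel
        rw [key, ContinuousLinearMap.coe_add']
        exact hp.add hr
    | monomial n c =>
        have key : Polynomial.aeval U (Polynomial.monomial n c)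
            - Polynomial.aeval U₀ (Polynomial.monomial n c) = c • (U ^ n - U₀ ^ n) := by
          rw [Polynomial.aeval_monomial, Polynomial.aeval_monomial, ← Algebra.smul_def,
            ← Algebra.smul_def, smul_sub]
        rw [key, ContinuousLinearMap.coe_smul']
        exact (hpowC n).smul c
  have hBC : IsCompactOperator ⇑B := by
    have h2 := hdiffC q
    rw [← hB, ← hA, hA0, sub_zero] at h2
    exact h2
  -- Part 1: countability of the spectrum of U
  set Λ : Set ℂ := {z : ℂ | ∃ x : H, ‖x‖ = 1 ∧ U x = z • x} with hΛ
  have hΛc : Λ.Countable := countable_eigenvalues U hU.1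
  have hspecU : spectrum ℂ U ⊆ ↑t ∪ Λ := by
    intro z hz
    by_cases hzt : z ∈ t
    · exact Or.inl (by exact_mod_cast hzt)
    right
    have hqz : q.eval z ≠ 0 := by
      rw [hq, Polynomial.eval_prod]
      apply Finset.prod_ne_zero_iff.mpr
      intro w hw
      simp only [Polynomial.eval_sub, Polynomial.eval_X, Polynomial.eval_C, sub_ne_zero]
      exact fun h => hzt (h ▸ hw)
    have hseq : ∀ n : ℕ, ∃ x : H, ‖x‖ = 1 ∧ ‖U x - z • x‖ < 1 / (n + 1) :=
      fun n => exists_approx_eigen U hUnormal hz (by positivity)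
    choose x hx1 hx2 using hseq
    have hUx : Filter.Tendsto (fun n => U (x n) - z • x n) Filter.atTop (nhds 0) := by
      apply squeeze_zero_norm (fun n => (hx2 n).le)
      exact tendsto_one_div_add_atTop_nhds_zero_nat
    obtain ⟨r, hr⟩ := Polynomial.X_sub_C_dvd_sub_C_eval (a := z) (p := q)
    have hfact : B - algebraMap ℂ (H →L[ℂ] H) (q.eval z)
        = Polynomial.aeval U r * (U - algebraMap ℂ (H →L[ℂ] H) z) := by
      have h3 : Polynomial.aeval U (q - Polynomial.C (q.eval z))
          = Polynomial.aeval U (r * (Polynomial.X - Polynomial.C z)) := by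
        rw [hr, mul_comm]
      simpa [map_sub, map_mul, Polynomial.aeval_X, Polynomial.aeval_C] using h3
    have hBx : Filter.Tendsto (fun n => B (x n) - q.eval z • x n) Filter.atTop (nhds 0) := by
      have hpt : ∀ n, B (x n) - q.eval z • x n = (Polynomial.aeval U r) (U (x n) - z • x n) := by
        intro n
        have h4 := congrArg (fun (f : H →L[ℂ] H) => f (x n)) hfact
        simpa [ContinuousLinearMap.sub_apply, ContinuousLinearMap.mul_apply,
          Algebra.algebraMap_eq_smul_one] using h4
      rw [show (fun n => B (x n) - q.eval z • x n)
          = (fun y => (Polynomial.aeval U r) y) ∘ (fun n => U (x n) - z • x n)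
          from funext fun n => hpt n]
      have hcont := (Polynomial.aeval U r).continuous.tendsto (0 : H)
      rw [map_zero] at hcont
      exact hcont.comp hUx
    obtain ⟨y, φ, hφ, hlim⟩ := exists_subseq_tendsto B hBC x hx1 hqz hBx
    have hy1 : ‖y‖ = 1 := by
      have h5 := (continuous_norm.tendsto y).comp hlim
      have hconst : Filter.Tendsto (fun n => ‖x (φ n)‖) Filter.atTop (nhds 1) := by
        simpa [hx1] using (tendsto_const_nhds : Filter.Tendsto (fun _ : ℕ => (1:ℝ)) Filter.atTop (nhds 1))
      exact (tendsto_nhds_unique h5 hconst)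
    have hUy : U y = z • y := by
      have h5 : Filter.Tendsto (fun n => U (x (φ n)) - z • x (φ n)) Filter.atTop
          (nhds (U y - z • y)) :=
        ((U.continuous.tendsto y).comp hlim).sub (hlim.const_smul z)
      have h6 : Filter.Tendsto (fun n => U (x (φ n)) - z • x (φ n)) Filter.atTop (nhds 0) :=
        hUx.comp hφ.tendsto_atTop
      exact sub_eq_zero.mp (tendsto_nhds_unique h5 h6)
    exact ⟨y, hy1, hUy⟩
  have hpart1 : (spectrum ℂ U).Countable :=
    ((t.countable_toSet).union hΛc).mono hspecU
  -- Part 2: density of the span of eigenvectors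
  refine ⟨hpart1, ?_⟩
  rw [Submodule.topologicalClosure_eq_top_iff]
  by_contra hMne
  set Egs : Submodule ℂ H := ⨆ μ : ℂ, Module.End.eigenspace (U : H →ₗ[ℂ] H) μ with hEgs
  set M : Submodule ℂ H := Egsᗮ with hMdef
  obtain ⟨x₀, hx₀M, hx₀⟩ := Submodule.ne_bot_iff M |>.mp hMne
  -- invariance of the eigenspace span under U and star U
  have hEU : ∀ v ∈ Egs, U v ∈ Egs := by
    intro v hv
    have hle : Egs ≤ Submodule.comap (U : H →ₗ[ℂ] H) Egs := by
      rw [hEgs]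
      refine iSup_le fun μ => ?_
      intro u hu
      rw [Submodule.mem_comap]
      have hu' : U u = μ • u := Module.End.mem_eigenspace_iff.mp hu
      have h22 : (U : H →ₗ[ℂ] H) u ∈ Module.End.eigenspace (U : H →ₗ[ℂ] H) μ := by
        show U u ∈ _
        rw [hu']
        exact Submodule.smul_mem _ _ hu
      exact le_iSup (fun μ => Module.End.eigenspace (U : H →ₗ[ℂ] H) μ) μ h22
    exact Submodule.mem_comap.mp (hle hv)
  have hEUs : ∀ v ∈ Egs, star U v ∈ Egs := by
    intro v hv
    have hle : Egs ≤ Submodule.comap ((star U : H →L[ℂ] H) : H →ₗ[ℂ] H) Egs := by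
      rw [hEgs]
      refine iSup_le fun μ => ?_
      intro u hu
      rw [Submodule.mem_comap]
      have hu' : U u = μ • u := Module.End.mem_eigenspace_iff.mp hu
      have hSU : star U * U = 1 := by
        rw [ContinuousLinearMap.star_eq_adjoint]; exact hU.1
      have hstarUU : ∀ y : H, star U (U y) = y := by
        intro y
        have h99 := congrArg (fun f : H →L[ℂ] H => f y) hSU
        simpa [ContinuousLinearMap.mul_apply] using h99
      rcases eq_or_ne μ 0 with rfl | hμ
      · have hUinj : u = 0 := by
          have h1 := hstarUU u
          rw [hu', zero_smul, map_zero] at h1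
          exact h1.symm
        show star U u ∈ _
        rw [hUinj, map_zero]
        exact Submodule.zero_mem _
      · have h1 := hstarUU u
        have h2 : star U u = μ⁻¹ • u := by
          rw [hu', map_smul] at h1
          calc star U u = (μ⁻¹ * μ) • star U u := by rw [inv_mul_cancel₀ hμ, one_smul]
            _ = μ⁻¹ • (μ • star U u) := by rw [mul_smul]
            _ = μ⁻¹ • u := by rw [h1]
        show star U u ∈ _
        rw [h2]
        have h23 : u ∈ Module.End.eigenspace (U : H →ₗ[ℂ] H) μ := hu
        exact le_iSup (fun μ => Module.End.eigenspace (U : H →ₗ[ℂ] H) μ) μ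
          (Submodule.smul_mem _ _ h23)
    exact Submodule.mem_comap.mp (hle hv)
  have hMU : ∀ x ∈ M, U x ∈ M := by
    intro x hx
    rw [hMdef, Submodule.mem_orthogonal] at hx ⊢
    intro u hu
    have h1 : @inner ℂ _ _ u (U x) = @inner ℂ _ _ (star U u) x := by
      rw [ContinuousLinearMap.star_eq_adjoint, ContinuousLinearMap.adjoint_inner_left]
    rw [h1]
    exact hx _ (hEUs u hu)
  have hMUs : ∀ x ∈ M, star U x ∈ M := by
    intro x hx
    rw [hMdef, Submodule.mem_orthogonal] at hx ⊢
    intro u hu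
    have h1 : @inner ℂ _ _ u (star U x) = @inner ℂ _ _ (U u) x := by
      rw [ContinuousLinearMap.star_eq_adjoint, ContinuousLinearMap.adjoint_inner_right]
    rw [h1]
    exact hx _ (hEU u hu)
  have hMB : ∀ x ∈ M, B x ∈ M := fun x hx => aeval_mem_of_mem hMU q hx
  have hMBs : ∀ x ∈ M, star B x ∈ M := by
    intro x hx
    rw [hB, star_aeval]
    exact aeval_mem_of_mem hMUs _ hx
  have hMclosed : IsClosed (M : Set H) := Submodule.isClosed_orthogonal _
  haveI : CompleteSpace M := hMclosed.completeSpace_coe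
  set T' : M →L[ℂ] M := (B.comp M.subtypeL).codRestrict M (fun ξ => hMB _ ξ.2) with hT'
  set T'' : M →L[ℂ] M := ((star B).comp M.subtypeL).codRestrict M (fun ξ => hMBs _ ξ.2) with hT''
  have hT'apply : ∀ ξ : M, (T' ξ : H) = B ξ := fun ξ => rfl
  have hT''apply : ∀ ξ : M, (T'' ξ : H) = star B ξ := fun ξ => rfl
  have hstarT' : star T' = T'' := by
    rw [ContinuousLinearMap.star_eq_adjoint]
    symm
    rw [ContinuousLinearMap.eq_adjoint_iff]
    intro ξ η
    have h1 : (@inner ℂ _ _ (T'' ξ) η : ℂ) = @inner ℂ _ _ ((star B) (ξ : H)) (η : H) := rfl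
    have h2 : (@inner ℂ _ _ ξ (T' η) : ℂ) = @inner ℂ _ _ (ξ : H) (B (η : H)) := rfl
    rw [h1, h2, ContinuousLinearMap.star_eq_adjoint, ContinuousLinearMap.adjoint_inner_left]
  haveI hBnormal : IsStarNormal B := isStarNormal_aeval U ⟨hUnormal⟩ q
  have hT'normal : Commute (star T') T' := by
    rw [hstarT']
    ext ξ
    show ((T'' (T' ξ) : M) : H) = ((T' (T'' ξ) : M) : H)
    rw [hT''apply, hT'apply, hT'apply, hT''apply]
    have h7 := congrArg (fun f : H →L[ℂ] H => f (ξ : H)) hBnormal.star_comm_self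
    simpa [ContinuousLinearMap.mul_apply] using h7
  have hT'compact : IsCompactOperator ⇑T' := by
    have h8 : IsCompactOperator (⇑B ∘ ⇑(M.subtypeL)) := hBC.comp_clm M.subtypeL
    exact h8.codRestrict (fun ξ => hMB _ ξ.2) hMclosed
  -- find a nonzero x ∈ M with B x = lam • x
  have hxlam : ∃ (x : H) (lam : ℂ), x ∈ M ∧ x ≠ 0 ∧ B x = lam • x := by
    by_cases hT0 : T' = 0
    · refine ⟨x₀, 0, hx₀M, hx₀, ?_⟩
      have h9 := congrArg Subtype.val (congrArg (fun f : M →L[ℂ] M => f ⟨x₀, hx₀M⟩) hT0)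
      rw [zero_smul]
      simpa [hT'apply] using h9
    · have hlamex : ∃ lam ∈ spectrum ℂ T', lam ≠ 0 := by
        by_contra hcon
        push_neg at hcon
        have hrad : spectralRadius ℂ T' = 0 := by
          rw [spectralRadius]
          refine le_antisymm ?_ zero_le
          refine iSup₂_le fun k hk => ?_
          rw [hcon k hk]
          simp
        haveI : IsStarNormal T' := ⟨hT'normal⟩
        have h10 := IsStarNormal.spectralRadius_eq_nnnorm T'
        rw [hrad] at h10
        have h9 : ‖T'‖₊ = 0 := by exact_mod_cast h10.symm
        exact hT0 ((ContinuousLinearMap.opNorm_zero_iff T').mp (by rw [← coe_nnnorm, h9]; rfl))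
      obtain ⟨lam, hlam, hlam0⟩ := hlamex
      have hseq : ∀ n : ℕ, ∃ ξ : M, ‖ξ‖ = 1 ∧ ‖T' ξ - lam • ξ‖ < 1 / (n + 1) :=
        fun n => exists_approx_eigen T' hT'normal hlam (by positivity)
      choose ξ hξ1 hξ2 using hseq
      set x : ℕ → H := fun n => (ξ n : H) with hx
      have hx1 : ∀ n, ‖x n‖ = 1 := fun n => hξ1 n
      have hBxlam : Filter.Tendsto (fun n => B (x n) - lam • x n) Filter.atTop (nhds 0) := by
        refine squeeze_zero_norm ?_ (tendsto_one_div_add_atTop_nhds_zero_nat)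
        · intro n
          have h11 : B (x n) - lam • x n = ((T' (ξ n) - lam • ξ n : M) : H) := by
            push_cast
            rw [hT'apply]
          rw [h11]
          have h12 : ‖((T' (ξ n) - lam • ξ n : M) : H)‖ = ‖T' (ξ n) - lam • ξ n‖ := rfl
          rw [h12]
          exact (hξ2 n).le
      obtain ⟨y, φ, hφ, hlim⟩ := exists_subseq_tendsto B hBC x hx1 hlam0 hBxlam
      have hyM : y ∈ M := hMclosed.mem_of_tendsto hlim
        (Filter.Eventually.of_forall fun n => (ξ (φ n)).2)
      have hy1 : ‖y‖ = 1 := by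
        have h5 := (continuous_norm.tendsto y).comp hlim
        have hconst : Filter.Tendsto (fun n => ‖x (φ n)‖) Filter.atTop (nhds 1) := by
          simpa [hx1] using (tendsto_const_nhds : Filter.Tendsto (fun _ : ℕ => (1:ℝ))
            Filter.atTop (nhds 1))
        exact tendsto_nhds_unique h5 hconst
      have hBy : B y = lam • y := by
        have h5 : Filter.Tendsto (fun n => B (x (φ n)) - lam • x (φ n)) Filter.atTop
            (nhds (B y - lam • y)) :=
          ((B.continuous.tendsto y).comp hlim).sub (hlim.const_smul lam)
        have h6 : Filter.Tendsto (fun n => B (x (φ n)) - lam • x (φ n)) Filter.atTop (nhds 0) :=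
          hBxlam.comp hφ.tendsto_atTop
        exact sub_eq_zero.mp (tendsto_nhds_unique h5 h6)
      exact ⟨y, lam, hyM, fun h0 => by simp [h0] at hy1, hBy⟩
  obtain ⟨x, lam, hxM, hx0, hBxeq⟩ := hxlam
  -- factor q - C lam into linear factors and extract an eigenvector inside M
  set p' : ℂ[X] := q - Polynomial.C lam with hp'
  have hp'monic : p'.Monic := hqmonic.sub_of_left (lt_of_le_of_lt Polynomial.degree_C_le hqdeg)
  have hp'x : (Polynomial.aeval U p') x = 0 := by
    rw [hp', map_sub, ContinuousLinearMap.sub_apply, Polynomial.aeval_C]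
    have h13 : algebraMap ℂ (H →L[ℂ] H) lam x = lam • x := by
      simp [Algebra.algebraMap_eq_smul_one]
    rw [h13, ← hB, hBxeq, sub_self]
  have hsplit : p'.Splits := IsAlgClosed.splits p'
  have hfactor := hsplit.eq_prod_roots_of_monic hp'monic
  obtain ⟨l, hl⟩ := Quotient.exists_rep p'.roots
  have hl' : (l : Multiset ℂ) = p'.roots := hl
  have hprodx : (l.map fun w => U - algebraMap ℂ (H →L[ℂ] H) w).prod x = 0 := by
    have h10 : Polynomial.aeval U p' = (l.map fun w => U - algebraMap ℂ (H →L[ℂ] H) w).prod := by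
      conv_lhs => rw [hfactor, ← hl']
      rw [Multiset.map_coe, Multiset.prod_coe]
      rw [map_list_prod (Polynomial.aeval U : ℂ[X] →ₐ[ℂ] (H →L[ℂ] H)), List.map_map]
      congr 1
      apply List.map_congr_left
      intro a _
      simp [Function.comp, map_sub, Polynomial.aeval_X, Polynomial.aeval_C]
    rw [← h10]
    exact hp'x
  obtain ⟨v, hvM, hv0, w, hvw⟩ := exists_eigenvector_of_prod U hMU l x hxM hx0 hprodx
  have hvE : v ∈ Egs := by
    rw [hEgs]
    exact le_iSup (fun μ => Module.End.eigenspace (U : H →ₗ[ℂ] H) μ) w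
      (Module.End.mem_eigenspace_iff.mpr hvw)
  have hv00 : v = 0 := by
    have h11 := (Submodule.mem_orthogonal Egs v).mp hvM v hvE
    rwa [inner_self_eq_zero] at h11
  exact hv0 hv00
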